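/- Under the same assumptions, the total cumulative infection $CI$ is strictly decreasing in each vaccination rate $x^a$ and $x^v$, and strictly increasing in the anti-vaxxer share $q$ (given $x^a < x^v$). -/
import Mathlib

lemma stmt11_sqrt_arg (h q a v : ℝ) (h0 : 0 ≤ h) (h1 : h ≤ 1)
    (q0 : 0 ≤ q) (q1 : q ≤ 1) (ha : 0 ≤ a) (hv : 0 ≤ v) :
    0 ≤ ((h+(1-h)*q)*a + (h+(1-h)*(1-q))*v)^2 - 4*h*a*v := by
  nlinarith [sq_nonneg ((h+(1-h)*q)*a - (h+(1-h)*(1-q))*v),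
    mul_nonneg (mul_nonneg (mul_nonneg (mul_nonneg ha hv) (sq_nonneg (1-h))) q0)
      (by linarith : (0:ℝ) ≤ 1-q)]

lemma stmt11_facts (h μ q a v : ℝ) (h0 : 0 ≤ h) (h1 : h < 1)
    (q0 : 0 < q) (q1 : q < 1) (hv : 0 < v) (hva : v < a)
    (hst : ((h+(1-h)*q)*a + (h+(1-h)*(1-q))*v
        + Real.sqrt (((h+(1-h)*q)*a + (h+(1-h)*(1-q))*v)^2 - 4*h*a*v))/2 < μ) :
    0 < μ^2 - μ*((h+(1-h)*q)*a + (h+(1-h)*(1-q))*v) + h*a*v ∧ h*a < μ ∧ 0 < μ := by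
  have ha0 : 0 < a := lt_trans hv hva
  set T : ℝ := (h+(1-h)*q)*a + (h+(1-h)*(1-q))*v with hTdef
  have harg : 0 ≤ T^2 - 4*h*a*v :=
    stmt11_sqrt_arg h q a v h0 h1.le q0.le q1.le ha0.le hv.le
  set D : ℝ := Real.sqrt (T^2 - 4*h*a*v) with hDdef
  have hD0 : 0 ≤ D := Real.sqrt_nonneg _
  have hD2 : D^2 = T^2 - 4*h*a*v := Real.sq_sqrt harg
  have hμT : T + D < 2*μ := by linarith
  have hT0 : 0 < T := by
    have h1' : 0 < h + (1-h)*q := by nlinarith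
    have h2' : 0 < h + (1-h)*(1-q) := by nlinarith
    have := mul_pos h1' ha0
    have := mul_pos h2' hv
    rw [hTdef]; linarith
  have hμ0 : 0 < μ := by linarith
  refine ⟨?_, ?_, hμ0⟩
  · have hA : 0 < 2*μ - T - D := by linarith
    have hB : 0 < 2*μ - T + D := by linarith
    nlinarith [mul_pos hA hB]
  · have hkey : D^2 - (2*h*a - T)^2 = 4*h*a*(1-h)*q*(a-v) := by rw [hD2, hTdef]; ring
    have hnn : 0 ≤ 4*h*a*(1-h)*q*(a-v) := by
      have : 0 ≤ h*a*(1-h)*q*(a-v) :=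
        mul_nonneg (mul_nonneg (mul_nonneg (mul_nonneg h0 ha0.le) (by linarith)) q0.le)
          (by linarith)
      linarith
    have h2 : 2*h*a - T ≤ D := by nlinarith
    linarith

theorem stmt_11 (h μ ρ0 : ℝ)
    (hh : h ∈ Set.Ico (0:ℝ) 1) (hρ0 : 0 < ρ0)
    (qa qv : ℝ → ℝ) (T Δ μhat CI : ℝ → ℝ → ℝ → ℝ)
    (hqa : ∀ q, qa q = h + (1-h)*q) (hqv : ∀ q, qv q = h + (1-h)*(1-q))
    (hT : ∀ xa xv q, T xa xv q = qa q*(1-xa) + qv q*(1-xv))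
    (hΔ : ∀ xa xv q, Δ xa xv q =
      Real.sqrt ((T xa xv q)^2 - 4*h*(1-xa)*(1-xv)))
    (hμhat : ∀ xa xv q, μhat xa xv q = (T xa xv q + Δ xa xv q)/2)
    (hstab : ∀ xa xv q, 0 ≤ xa → xa < xv → xv < 1 → q ∈ Set.Ioo (0:ℝ) 1 →
      μhat xa xv q < μ)
    (hCI : ∀ xa xv q, CI xa xv q =
      2*ρ0 * (μ - (1-xa)*(qa q - q) - (1-xv)*(qv q - (1-q)))
        / ((T xa xv q - 2*μ - Δ xa xv q) * (T xa xv q - 2*μ + Δ xa xv q))) :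
    (∀ xa₁ xa₂ xv q, 0 ≤ xa₁ → xa₁ < xa₂ → xa₂ < xv → xv < 1 →
        q ∈ Set.Ioo (0:ℝ) 1 → CI xa₂ xv q < CI xa₁ xv q)
    ∧ (∀ xa xv₁ xv₂ q, 0 ≤ xa → xa < xv₁ → xv₁ < xv₂ → xv₂ < 1 →
        q ∈ Set.Ioo (0:ℝ) 1 → CI xa xv₂ q < CI xa xv₁ q)
    ∧ (∀ xa xv q₁ q₂, 0 ≤ xa → xa < xv → xv < 1 →
        q₁ ∈ Set.Ioo (0:ℝ) 1 → q₂ ∈ Set.Ioo (0:ℝ) 1 → q₁ < q₂ →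
        CI xa xv q₁ < CI xa xv q₂) := by
  obtain ⟨h0, h1⟩ := hh
  -- master fact: closed form + positivity facts at every admissible point
  have key : ∀ xa xv q, 0 ≤ xa → xa < xv → xv < 1 → q ∈ Set.Ioo (0:ℝ) 1 →
      CI xa xv q = ρ0 * (μ - h*((1-xa)*(1-q) + (1-xv)*q)) /
        (2*(μ^2 - μ*((h+(1-h)*q)*(1-xa) + (h+(1-h)*(1-q))*(1-xv)) + h*(1-xa)*(1-xv)))
      ∧ 0 < μ^2 - μ*((h+(1-h)*q)*(1-xa) + (h+(1-h)*(1-q))*(1-xv)) + h*(1-xa)*(1-xv)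
      ∧ h*(1-xa) < μ ∧ 0 < μ := by
    intro xa xv q hxa hxaxv hxv hq
    obtain ⟨hq0, hq1⟩ := hq
    have hv0 : 0 < 1 - xv := by linarith
    have hva : 1 - xv < 1 - xa := by linarith
    have hTeq : T xa xv q = (h+(1-h)*q)*(1-xa) + (h+(1-h)*(1-q))*(1-xv) := by
      rw [hT, hqa, hqv]
    have hst : ((h+(1-h)*q)*(1-xa) + (h+(1-h)*(1-q))*(1-xv)
        + Real.sqrt (((h+(1-h)*q)*(1-xa) + (h+(1-h)*(1-q))*(1-xv))^2
          - 4*h*(1-xa)*(1-xv)))/2 < μ := by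
      have := hstab xa xv q hxa hxaxv hxv ⟨hq0, hq1⟩
      rw [hμhat, hΔ, hTeq] at this
      exact this
    obtain ⟨hM, hha, hμ0⟩ := stmt11_facts h μ q (1-xa) (1-xv) h0 h1 hq0 hq1 hv0 hva hst
    refine ⟨?_, hM, hha, hμ0⟩
    have harg : 0 ≤ (T xa xv q)^2 - 4*h*(1-xa)*(1-xv) := by
      rw [hTeq]
      exact stmt11_sqrt_arg h q (1-xa) (1-xv) h0 h1.le hq0.le hq1.le
        (by linarith) hv0.le
    have hD2 : (Δ xa xv q)^2 = (T xa xv q)^2 - 4*h*(1-xa)*(1-xv) := by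
      rw [hΔ]; exact Real.sq_sqrt harg
    have hden : (T xa xv q - 2*μ - Δ xa xv q) * (T xa xv q - 2*μ + Δ xa xv q)
        = 4*(μ^2 - μ*((h+(1-h)*q)*(1-xa) + (h+(1-h)*(1-q))*(1-xv)) + h*(1-xa)*(1-xv)) := by
      rw [mul_comm, ← sq_sub_sq, hD2, hTeq]; ring
    rw [hCI, hden, hqa, hqv,
      div_eq_div_iff (by linarith) (by linarith : (2:ℝ)*(μ^2 - μ*((h+(1-h)*q)*(1-xa) + (h+(1-h)*(1-q))*(1-xv)) + h*(1-xa)*(1-xv)) ≠ 0)]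
    ring
  refine ⟨?_, ?_, ?_⟩
  · -- decreasing in xa
    intro xa₁ xa₂ xv q hxa1 h12 h2v hv1 hq
    obtain ⟨hq0, hq1⟩ := hq
    obtain ⟨hf1, hM1, hha1, hμ0⟩ := key xa₁ xv q hxa1 (lt_trans h12 h2v) hv1 ⟨hq0, hq1⟩
    obtain ⟨hf2, hM2, hha2, -⟩ := key xa₂ xv q (by linarith) h2v hv1 ⟨hq0, hq1⟩
    rw [hf1, hf2]
    rw [div_lt_div_iff₀ (by linarith) (by linarith)]
    have hμhv : h*(1-xv) < μ := by nlinarith [mul_le_mul_of_nonneg_left (le_of_lt (by linarith : (1-xv) < (1-xa₂))) h0]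
    have hB : 0 < (μ - h*(1-xv))^2 := pow_pos (by linarith) 2
    nlinarith [mul_pos (mul_pos (mul_pos hρ0 (by linarith : (0:ℝ) < xa₂ - xa₁)) hq0) hB]
  · -- decreasing in xv
    intro xa xv₁ xv₂ q hxa ha1 h12 hv2 hq
    obtain ⟨hq0, hq1⟩ := hq
    obtain ⟨hf1, hM1, hha, hμ0⟩ := key xa xv₁ q hxa ha1 (by linarith) ⟨hq0, hq1⟩
    obtain ⟨hf2, hM2, -, -⟩ := key xa xv₂ q hxa (by linarith) hv2 ⟨hq0, hq1⟩
    rw [hf1, hf2]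
    rw [div_lt_div_iff₀ (by linarith) (by linarith)]
    have hB : 0 < (μ - h*(1-xa))^2 := pow_pos (by linarith) 2
    nlinarith [mul_pos (mul_pos (mul_pos hρ0 (by linarith : (0:ℝ) < xv₂ - xv₁))
      (by linarith : (0:ℝ) < 1 - q)) hB]
  · -- increasing in q
    intro xa xv q₁ q₂ hxa hav hv1 hq1m hq2m h12
    obtain ⟨hq10, hq11⟩ := hq1m
    obtain ⟨hq20, hq21⟩ := hq2m
    obtain ⟨hf1, hM1, hha, hμ0⟩ := key xa xv q₁ hxa hav hv1 ⟨hq10, hq11⟩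
    obtain ⟨hf2, hM2, -, -⟩ := key xa xv q₂ hxa hav hv1 ⟨hq20, hq21⟩
    rw [hf1, hf2]
    rw [div_lt_div_iff₀ (by linarith) (by linarith)]
    have hμhv : h*(1-xv) < μ := by nlinarith [mul_le_mul_of_nonneg_left (le_of_lt (by linarith : (1-xv) < (1-xa))) h0]
    nlinarith [mul_pos (mul_pos (mul_pos (mul_pos hρ0
      (by linarith : (0:ℝ) < q₂ - q₁)) (by linarith : (0:ℝ) < xv - xa))
      (by linarith : (0:ℝ) < μ - h*(1-xa))) (by linarith : (0:ℝ) < μ - h*(1-xv))]
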